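/- For a finite group G with subgroups H₁ and H₂, the permutation representations of G on ℂ[H₁\G] and ℂ[H₂\G] are equivalent if and only if every conjugacy class of G intersects H₁ and H₂ in the same number of elements. -/

import Mathlib

open LinearMap Module Representation TensorProduct
open scoped TensorProduct
set_option linter.unusedSectionVars false
set_option linter.unusedVariables false
set_option maxHeartbeats 1000000

noncomputable section
namespace GassmannAux
variable {G : Type} [Group G] [Fintype G]
variable {V W : Type} [AddCommGroup V] [Module ℂ V] [AddCommGroup W] [Module ℂ W]

lemma rep_inv_apply (ρ : Representation ℂ G V) (g : G) (v : V) : ρ g⁻¹ (ρ g v) = v := by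
  have : (ρ g⁻¹ * ρ g) v = v := by rw [← map_mul]; simp
  simpa using this

lemma rep_apply_inv (ρ : Representation ℂ G V) (g : G) (v : V) : ρ g (ρ g⁻¹ v) = v := by
  simpa using rep_inv_apply ρ g⁻¹ v

/-- restriction of a representation to an invariant subspace -/
def subRep (ρ : Representation ℂ G V) (p : Submodule ℂ V)
    (hp : ∀ g : G, ∀ v ∈ p, ρ g v ∈ p) : Representation ℂ G p where
  toFun g := (ρ g).restrict (hp g)
  map_one' := by ext v; simp [LinearMap.restrict_apply]
  map_mul' g h := by
    ext v
    simp [LinearMap.restrict_apply, map_mul, Module.End.mul_apply]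

@[simp] lemma subRep_coe (ρ : Representation ℂ G V) (p : Submodule ℂ V)
    (hp : ∀ g : G, ∀ v ∈ p, ρ g v ∈ p) (g : G) (v : p) :
    ((subRep ρ p hp g v : p) : V) = ρ g (v : V) := rfl

lemma averageMap_eq (ρ : Representation ℂ G V) [Invertible ((Fintype.card G : ℂ))] :
    ρ.averageMap = ⅟(Fintype.card G : ℂ) • ∑ g : G, (ρ g : V →ₗ[ℂ] V) := by
  show ρ.asAlgebraHom (GroupAlgebra.average ℂ G) = _
  rw [GroupAlgebra.average, map_smul, map_sum]
  congr 1
  exact Finset.sum_congr rfl fun g _ => ρ.asAlgebraHom_single_one g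

/-- Existence of an invariant complement (Maschke). -/
lemma exists_invariant_compl (ρ : Representation ℂ G V) (p : Submodule ℂ V)
    (hp : ∀ g : G, ∀ v ∈ p, ρ g v ∈ p) :
    ∃ q : Submodule ℂ V, IsCompl p q ∧ ∀ g : G, ∀ v ∈ q, ρ g v ∈ q := by
  letI : Invertible ((Fintype.card G : ℂ)) :=
    invertibleOfNonzero (by exact_mod_cast (Fintype.card_ne_zero (α := G)))
  obtain ⟨q₀, hq₀⟩ := Submodule.exists_isCompl p
  set π₀ : V →ₗ[ℂ] V := p.subtype ∘ₗ p.projectionOnto q₀ hq₀ with hπ₀def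
  have hπ₀ : IsProj p π₀ := by
    constructor
    · intro x; exact Submodule.coe_mem _
    · intro x hx
      simp [hπ₀def, Submodule.projectionOnto_apply_left hq₀ ⟨x, hx⟩]
  set π : V →ₗ[ℂ] V := (ρ.linHom ρ).averageMap π₀ with hπdef
  have hπinv : π ∈ (ρ.linHom ρ).invariants := Representation.averageMap_invariant _ π₀
  have hπcomm : ∀ (g : G) (v : V), π (ρ g v) = ρ g (π v) := by
    intro g v
    have h := hπinv g
    rw [Representation.linHom_apply] at h
    conv_lhs => rw [← h]
    simp only [LinearMap.comp_apply]
    rw [rep_inv_apply]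
  have hπapply : ∀ v : V, π v = ⅟(Fintype.card G : ℂ) • ∑ g : G, ρ g (π₀ (ρ g⁻¹ v)) := by
    intro v
    rw [hπdef, averageMap_eq]
    simp only [LinearMap.smul_apply, LinearMap.sum_apply, Representation.linHom_apply,
      LinearMap.comp_apply]
  have hπproj : IsProj p π := by
    constructor
    · intro v
      rw [hπapply v]
      refine Submodule.smul_mem _ _ (Submodule.sum_mem _ fun g _ => ?_)
      exact hp g _ (hπ₀.map_mem _)
    · intro v hv
      rw [hπapply v]
      have : ∀ g : G, ρ g (π₀ (ρ g⁻¹ v)) = v := by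
        intro g
        rw [hπ₀.map_id _ (hp g⁻¹ v hv), rep_apply_inv]
      rw [Finset.sum_congr rfl fun g _ => this g, Finset.sum_const, Finset.card_univ]
      rw [← Nat.cast_smul_eq_nsmul ℂ]
      exact invOf_smul_smul _ v
  refine ⟨LinearMap.ker π, hπproj.isCompl, fun g v hv => ?_⟩
  have : π v = 0 := hv
  show π (ρ g v) = 0
  rw [hπcomm, this, map_zero]

/-- character is additive over an invariant complemented pair -/
lemma trace_eq_add_of_isCompl [FiniteDimensional ℂ V] (ρ : Representation ℂ G V)
    (p q : Submodule ℂ V) (h : IsCompl p q)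
    (hp : ∀ g : G, ∀ v ∈ p, ρ g v ∈ p) (hq : ∀ g : G, ∀ v ∈ q, ρ g v ∈ q) (g : G) :
    trace ℂ V (ρ g) = trace ℂ p (subRep ρ p hp g) + trace ℂ q (subRep ρ q hq g) := by
  set e := Submodule.prodEquivOfIsCompl p q h with he
  have key : ρ g = e.conj ((subRep ρ p hp g).prodMap (subRep ρ q hq g)) := by
    apply LinearMap.ext
    intro v
    obtain ⟨⟨x, y⟩, rfl⟩ := e.surjective v
    have h2 : (e.conj ((subRep ρ p hp g).prodMap (subRep ρ q hq g))) (e (x, y))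
        = e ((subRep ρ p hp g) x, (subRep ρ q hq g) y) := by
      rw [LinearEquiv.conj_apply_apply, LinearEquiv.symm_apply_apply, LinearMap.prodMap_apply]
    rw [h2]
    show ρ g ((x : V) + (y : V)) = ((subRep ρ p hp g x : p) : V) + ((subRep ρ q hq g y : q) : V)
    rw [map_add, subRep_coe, subRep_coe]
  rw [key, trace_conj', trace_prodMap']


lemma trace_linHom [FiniteDimensional ℂ V] [FiniteDimensional ℂ W]
    (ρV : Representation ℂ G V) (ρW : Representation ℂ G W) (g : G) :
    trace ℂ (V →ₗ[ℂ] W) ((ρV.linHom ρW) g)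
      = trace ℂ V (ρV g⁻¹) * trace ℂ W (ρW g) := by
  have comm := Representation.dualTensorHom_comm ρV ρW g
  set e := dualTensorHomEquiv ℂ V W with he
  have hcoe : (e : Module.Dual ℂ V ⊗[ℂ] W →ₗ[ℂ] (V →ₗ[ℂ] W)) = dualTensorHom ℂ V W :=
    rfl
  have key : (ρV.linHom ρW) g = e.conj (TensorProduct.map (ρV.dual g) (ρW g)) := by
    apply LinearMap.ext
    intro f
    obtain ⟨x, rfl⟩ := e.surjective f
    rw [LinearEquiv.conj_apply_apply]
    have := LinearMap.congr_fun comm x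
    simp only [LinearMap.comp_apply] at this
    rw [← hcoe] at this
    simpa using this.symm
  rw [key, trace_conj', trace_tensorProduct', Representation.dual_apply, trace_transpose']

lemma finrank_invariants_eq [FiniteDimensional ℂ V] (ρ : Representation ℂ G V)
    [Invertible ((Fintype.card G : ℂ))] :
    (Module.finrank ℂ ρ.invariants : ℂ)
      = ⅟(Fintype.card G : ℂ) * ∑ g : G, trace ℂ V (ρ g) := by
  have h := (Representation.isProj_averageMap ρ).trace
  rw [← h, averageMap_eq, map_smul, map_sum, smul_eq_mul]

/-- If the characters agree, there exists a nonzero equivariant map. -/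
lemma exists_ne_zero_equivariant [FiniteDimensional ℂ V] [FiniteDimensional ℂ W]
    (ρV : Representation ℂ G V) (ρW : Representation ℂ G W)
    (hchar : ∀ g : G, trace ℂ V (ρV g) = trace ℂ W (ρW g))
    (hV : Module.finrank ℂ V ≠ 0) :
    ∃ f : V →ₗ[ℂ] W, f ≠ 0 ∧ ∀ g : G, (ρW g) ∘ₗ f = f ∘ₗ (ρV g) := by
  letI : Invertible ((Fintype.card G : ℂ)) :=
    invertibleOfNonzero (by exact_mod_cast (Fintype.card_ne_zero (α := G)))
  have hdim : Module.finrank ℂ (ρV.linHom ρW).invariants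
      = Module.finrank ℂ (ρV.linHom ρV).invariants := by
    have h1 := finrank_invariants_eq (ρV.linHom ρW)
    have h2 := finrank_invariants_eq (ρV.linHom ρV)
    rw [Finset.sum_congr rfl (fun g _ => trace_linHom ρV ρW g)] at h1
    rw [Finset.sum_congr rfl (fun g _ => trace_linHom ρV ρV g)] at h2
    have : (Module.finrank ℂ (ρV.linHom ρW).invariants : ℂ)
        = (Module.finrank ℂ (ρV.linHom ρV).invariants : ℂ) := by
      rw [h1, h2]
      congr 1
      exact Finset.sum_congr rfl fun g _ => by rw [hchar g]
    exact_mod_cast this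
  have hVnontriv : Nontrivial V := by
    rw [← Module.finrank_pos_iff (R := ℂ)]
    omega
  have hid : (LinearMap.id : V →ₗ[ℂ] V) ∈ (ρV.linHom ρV).invariants := by
    intro g
    rw [Representation.linHom_apply]
    ext v
    simp [rep_apply_inv]
  have hidne : (LinearMap.id : V →ₗ[ℂ] V) ≠ 0 := by
    obtain ⟨v, hv⟩ := exists_ne (0 : V)
    intro h
    exact hv (by simpa using LinearMap.congr_fun h v)
  have hpos : 0 < Module.finrank ℂ (ρV.linHom ρV).invariants := by
    rw [Module.finrank_pos_iff (R := ℂ)]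
    exact ⟨⟨LinearMap.id, hid⟩, 0, by simp [Subtype.ext_iff, hidne]⟩
  have : Nontrivial (ρV.linHom ρW).invariants := by
    rw [← Module.finrank_pos_iff (R := ℂ), hdim]
    exact hpos
  obtain ⟨f, hf⟩ := exists_ne (0 : (ρV.linHom ρW).invariants)
  refine ⟨(f : V →ₗ[ℂ] W), fun h0 => hf (Subtype.ext h0), fun g => ?_⟩
  have hfinv := f.2 g
  rw [Representation.linHom_apply] at hfinv
  ext v
  conv_rhs => rw [← hfinv]
  simp only [LinearMap.comp_apply]
  rw [rep_inv_apply]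

lemma trace_eq_of_equivariant (ρV : Representation ℂ G V) (ρW : Representation ℂ G W)
    (e : V ≃ₗ[ℂ] W) (hcomm : ∀ (g : G) (v : V), e (ρV g v) = ρW g (e v)) (g : G) :
    trace ℂ V (ρV g) = trace ℂ W (ρW g) := by
  have : ρW g = e.conj (ρV g) := by
    apply LinearMap.ext
    intro w
    obtain ⟨v, rfl⟩ := e.surjective w
    rw [LinearEquiv.conj_apply_apply, LinearEquiv.symm_apply_apply, hcomm]
  rw [this, trace_conj']

lemma subsingleton_case (ρV : Representation ℂ G V) (ρW : Representation ℂ G W)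
    [Subsingleton V] [Subsingleton W] :
    ∃ e : V ≃ₗ[ℂ] W, ∀ g : G, (ρW g) ∘ₗ (e : V →ₗ[ℂ] W) = (e : V →ₗ[ℂ] W) ∘ₗ (ρV g) :=
  ⟨LinearEquiv.ofSubsingleton V W, fun g => LinearMap.ext fun v => Subsingleton.elim _ _⟩

theorem exists_equiv_of_char_eq_aux (n : ℕ) :
    ∀ (V W : Type) [AddCommGroup V] [Module ℂ V] [AddCommGroup W] [Module ℂ W]
      [FiniteDimensional ℂ V] [FiniteDimensional ℂ W]
      (ρV : Representation ℂ G V) (ρW : Representation ℂ G W),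
      Module.finrank ℂ V ≤ n →
      (∀ g : G, trace ℂ V (ρV g) = trace ℂ W (ρW g)) →
      ∃ e : V ≃ₗ[ℂ] W, ∀ g : G, (ρW g) ∘ₗ (e : V →ₗ[ℂ] W) = (e : V →ₗ[ℂ] W) ∘ₗ (ρV g) := by
  induction n with
  | zero =>
    intro V W _ _ _ _ _ _ ρV ρW hn hchar
    have hV0 : Module.finrank ℂ V = 0 := Nat.le_zero.mp hn
    have hW0 : Module.finrank ℂ W = 0 := by
      have h1 := hchar 1
      simp only [_root_.map_one, trace_one, hV0, Nat.cast_zero] at h1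
      exact_mod_cast h1.symm
    have : Subsingleton V := Module.finrank_zero_iff.mp hV0
    have : Subsingleton W := Module.finrank_zero_iff.mp hW0
    exact subsingleton_case ρV ρW
  | succ n ih =>
    intro V W _ _ _ _ _ _ ρV ρW hn hchar
    by_cases h0 : Module.finrank ℂ V = 0
    · have hW0 : Module.finrank ℂ W = 0 := by
        have h1 := hchar 1
        simp only [_root_.map_one, trace_one, h0, Nat.cast_zero] at h1
        exact_mod_cast h1.symm
      have : Subsingleton V := Module.finrank_zero_iff.mp h0
      have : Subsingleton W := Module.finrank_zero_iff.mp hW0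
      exact subsingleton_case ρV ρW
    · obtain ⟨f, hf0, hfcomm⟩ := exists_ne_zero_equivariant ρV ρW hchar h0
      have hfcomm' : ∀ (g : G) (v : V), ρW g (f v) = f (ρV g v) := fun g v =>
        LinearMap.congr_fun (hfcomm g) v
      have hpinv : ∀ g : G, ∀ v ∈ LinearMap.ker f, ρV g v ∈ LinearMap.ker f := by
        intro g v hv
        rw [LinearMap.mem_ker] at hv ⊢
        rw [← hfcomm' g v, hv, map_zero]
      have hrinv : ∀ g : G, ∀ w ∈ LinearMap.range f, ρW g w ∈ LinearMap.range f := by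
        rintro g w ⟨v, rfl⟩
        exact ⟨ρV g v, (hfcomm' g v).symm⟩
      obtain ⟨q, hq, hqinv⟩ := exists_invariant_compl ρV (LinearMap.ker f) hpinv
      obtain ⟨q', hq', hq'inv⟩ := exists_invariant_compl ρW (LinearMap.range f) hrinv
      set p := LinearMap.ker f with hpdef
      set r := LinearMap.range f with hrdef
      -- the equivalence q ≃ r
      set f₁ : q →ₗ[ℂ] r :=
        LinearMap.codRestrict r (f ∘ₗ q.subtype) (fun c => LinearMap.mem_range_self f _) with hf₁
      have hf₁apply : ∀ x : q, (f₁ x : W) = f (x : V) := fun x => rfl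
      have hinj : Function.Injective f₁ := by
        intro a b hab
        have h1 : f ((a : V) - b) = 0 := by
          rw [map_sub]
          have := congrArg (Subtype.val) hab
          rw [hf₁apply, hf₁apply] at this
          rw [this, sub_self]
        have h2 : ((a : V) - b) ∈ p ⊓ q :=
          ⟨LinearMap.mem_ker.mpr h1, Submodule.sub_mem q a.2 b.2⟩
        rw [hq.inf_eq_bot] at h2
        exact Subtype.ext (sub_eq_zero.mp h2)
      have hsurj : Function.Surjective f₁ := by
        rintro ⟨w, v, rfl⟩
        have hv : v ∈ p ⊔ q := by rw [hq.sup_eq_top]; trivial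
        obtain ⟨a, ha, b, hb, rfl⟩ := Submodule.mem_sup.mp hv
        refine ⟨⟨b, hb⟩, Subtype.ext ?_⟩
        rw [hf₁apply]
        simp only [map_add]
        rw [LinearMap.mem_ker.mp ha, zero_add]
      set e₁ : q ≃ₗ[ℂ] r := LinearEquiv.ofBijective f₁ ⟨hinj, hsurj⟩ with he₁
      have he₁apply : ∀ x : q, (e₁ x : W) = f (x : V) := fun x => rfl
      have he₁comm : ∀ (g : G) (x : q),
          e₁ (subRep ρV q hqinv g x) = subRep ρW r hrinv g (e₁ x) := by
        intro g x
        apply Subtype.ext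
        rw [he₁apply, subRep_coe, subRep_coe, he₁apply, hfcomm']
      -- characters of the subrepresentations
      have hqr : ∀ g : G, trace ℂ q (subRep ρV q hqinv g) = trace ℂ r (subRep ρW r hrinv g) :=
        fun g => trace_eq_of_equivariant _ _ e₁ he₁comm g
      have hVchar := trace_eq_add_of_isCompl ρV p q hq hpinv hqinv
      have hWchar := trace_eq_add_of_isCompl ρW r q' hq' hrinv hq'inv
      have hker : ∀ g : G,
          trace ℂ p (subRep ρV p hpinv g) = trace ℂ q' (subRep ρW q' hq'inv g) := by
        intro g
        have h1 := hVchar g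
        have h2 := hWchar g
        have h3 := hchar g
        have h4 := hqr g
        rw [h1, h2] at h3
        rw [h4] at h3
        rw [add_comm] at h3
        exact add_left_cancel h3
      -- rank bound
      have hqne : q ≠ ⊥ := by
        intro hbot
        apply hf0
        rw [← LinearMap.ker_eq_top]
        have := hq.sup_eq_top
        rw [hbot, sup_bot_eq] at this
        exact this
      have hqpos : 0 < Module.finrank ℂ q := by
        rw [Module.finrank_pos_iff (R := ℂ)]
        exact (Submodule.nontrivial_iff_ne_bot).mpr hqne
      have hsum : Module.finrank ℂ p + Module.finrank ℂ q = Module.finrank ℂ V :=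
        Submodule.finrank_add_eq_of_isCompl hq
      have hple : Module.finrank ℂ p ≤ n := by omega
      obtain ⟨e₂, he₂⟩ := ih p q' (subRep ρV p hpinv) (subRep ρW q' hq'inv) hple hker
      have he₂comm : ∀ (g : G) (x : p),
          subRep ρW q' hq'inv g (e₂ x) = e₂ (subRep ρV p hpinv g x) := fun g x =>
        LinearMap.congr_fun (he₂ g) x
      -- assemble
      set eV := Submodule.prodEquivOfIsCompl p q hq with heV
      set eW := Submodule.prodEquivOfIsCompl q' r hq'.symm with heW
      set e : V ≃ₗ[ℂ] W := (eV.symm.trans ((e₂.prodCongr e₁).trans eW)) with he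
      refine ⟨e, fun g => ?_⟩
      apply LinearMap.ext
      intro v
      obtain ⟨⟨x, y⟩, rfl⟩ := eV.surjective v
      have heapp : ∀ (a : p) (b : q), e (eV (a, b)) = ((e₂ a : q') : W) + ((e₁ b : r) : W) := by
        intro a b
        rw [he]
        simp only [LinearEquiv.trans_apply, LinearEquiv.symm_apply_apply]
        rfl
      have hx : eV (x, y) = (x : V) + (y : V) := rfl
      simp only [LinearMap.comp_apply, LinearEquiv.coe_coe]
      rw [heapp]
      have hρ : ρV g (eV (x, y)) = eV (subRep ρV p hpinv g x, subRep ρV q hqinv g y) := by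
        rw [hx]
        show _ = ((subRep ρV p hpinv g x : p) : V) + ((subRep ρV q hqinv g y : q) : V)
        rw [map_add, subRep_coe, subRep_coe]
      rw [hρ, heapp]
      rw [map_add]
      congr 1
      · rw [← he₂comm g x]
        exact (subRep_coe ρW q' hq'inv g (e₂ x)).symm
      · rw [he₁comm g y]
        exact (subRep_coe ρW r hrinv g (e₁ y)).symm
/-- the permutation representation on functions on `G ⧸ H` -/
def permRep (H : Subgroup G) : Representation ℂ G ((G ⧸ H) → ℂ) where
  toFun g := LinearMap.funLeft ℂ ℂ (fun x => g⁻¹ • x)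
  map_one' := by
    ext f x
    simp [LinearMap.funLeft_apply]
  map_mul' g h := by
    ext f x
    simp [LinearMap.funLeft_apply, Module.End.mul_apply, mul_smul]

lemma permRep_apply (H : Subgroup G) (g : G) (f : (G ⧸ H) → ℂ) :
    permRep H g f = fun x => f (g⁻¹ • x) := rfl

/-- character of the permutation representation counts fixed points -/
lemma char_permRep (H : Subgroup G) (g : G) :
    trace ℂ ((G ⧸ H) → ℂ) (permRep H g) = (Nat.card {c : G ⧸ H // g • c = c} : ℂ) := by
  classical
  rw [trace_eq_matrix_trace ℂ (Pi.basisFun ℂ (G ⧸ H))]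
  rw [Matrix.trace]
  have hdiag : ∀ c : G ⧸ H,
      (LinearMap.toMatrix (Pi.basisFun ℂ (G ⧸ H)) (Pi.basisFun ℂ (G ⧸ H)) (permRep H g)).diag c
        = if g • c = c then (1 : ℂ) else 0 := by
    intro c
    rw [Matrix.diag_apply, LinearMap.toMatrix_apply, Pi.basisFun_repr, Pi.basisFun_apply]
    rw [permRep_apply]
    simp only [Pi.single_apply]
    congr 1
    simp only [eq_iff_iff]
    constructor
    · intro h; conv_lhs => rw [← h]
      simp [smul_smul]
    · intro h; conv_lhs => rw [← h]
      simp [smul_smul]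
  rw [Finset.sum_congr rfl fun c _ => hdiag c, Finset.sum_boole]
  rw [Nat.card_eq_fintype_card, Fintype.card_subtype]

/-- L1: fibers of `G → G ⧸ H` -/
lemma card_fix_mul_card (H : Subgroup G) (g : G) :
    Nat.card {c : G ⧸ H // g • c = c} * Nat.card H
      = Nat.card {x : G // x⁻¹ * g * x ∈ H} := by
  classical
  have h1 : Nat.card {x : G // x⁻¹ * g * x ∈ H}
      = Nat.card {x : G // g • ((x : G) : G ⧸ H) = (x : G ⧸ H)} := by
    apply Nat.card_congr
    apply Equiv.subtypeEquivRight
    intro x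
    rw [MulAction.Quotient.smul_mk]
    rw [show ((g • x : G) : G ⧸ H) = ((g * x : G) : G ⧸ H) from rfl]
    rw [QuotientGroup.eq]
    rw [show (g * x)⁻¹ * x = (x⁻¹ * g * x)⁻¹ by group]
    exact (H.inv_mem_iff).symm
  rw [h1]
  have e := QuotientGroup.preimageMkEquivSubgroupProdSet H {c : G ⧸ H | g • c = c}
  have h2 : Nat.card {x : G // g • ((x : G) : G ⧸ H) = (x : G ⧸ H)}
      = Nat.card H * Nat.card {c : G ⧸ H // g • c = c} := by
    rw [← Nat.card_prod]
    exact Nat.card_congr (e.trans (Equiv.refl _))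
  rw [h2, mul_comm]

/-- L2: counting solutions via the centralizer -/
lemma card_solutions (H : Subgroup G) (g : G) :
    Nat.card {x : G // x⁻¹ * g * x ∈ H}
      = Nat.card {h : G // h ∈ H ∧ IsConj g h} * Nat.card {z : G // z * g = g * z} := by
  classical
  rw [Nat.card_eq_fintype_card, Nat.card_eq_fintype_card, Nat.card_eq_fintype_card]
  rw [Fintype.card_subtype, Fintype.card_subtype, Fintype.card_subtype]
  rw [Finset.card_eq_sum_card_fiberwise (f := fun x : G => x⁻¹ * g * x)
    (t := Finset.univ.filter (fun h => h ∈ H ∧ IsConj g h))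
    (fun x hx => by
      simp only [Finset.coe_filter, Finset.mem_coe, Finset.mem_filter, Finset.mem_univ, true_and, Set.mem_setOf_eq] at hx ⊢
      refine ⟨hx, ?_⟩
      rw [isConj_iff]
      exact ⟨x⁻¹, by group⟩)]
  rw [Finset.sum_congr rfl (fun h hh => ?_), Finset.sum_const, smul_eq_mul]
  simp only [Finset.mem_filter, Finset.mem_univ, true_and] at hh
  obtain ⟨hH, hconj⟩ := hh
  obtain ⟨c, hc⟩ := isConj_iff.mp hconj
  -- fiber over h has the same size as the centralizer
  have : (Finset.univ.filter (fun x : G => x⁻¹ * g * x ∈ H)).filter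
      (fun x => x⁻¹ * g * x = h) = Finset.univ.filter (fun x : G => x⁻¹ * g * x = h) := by
    ext x
    simp only [Finset.mem_filter, Finset.mem_univ, true_and, and_iff_right_iff_imp]
    intro hx
    rw [hx]; exact hH
  rw [this]
  rw [← Fintype.card_subtype, ← Fintype.card_subtype]
  apply Fintype.card_congr
  refine ⟨fun x => ⟨(x : G) * c, ?_⟩, fun z => ⟨(z : G) * c⁻¹, ?_⟩, ?_, ?_⟩
  · obtain ⟨x, hx⟩ := x
    have : g * x = x * h := by
      rw [← hx]; group
    show (x * c) * g = g * (x * c)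
    calc (x * c) * g = x * (c * g * c⁻¹) * c := by group
    _ = x * h * c := by rw [hc]
    _ = g * (x * c) := by rw [← this]; group
  · obtain ⟨z, hz⟩ := z
    show (z * c⁻¹)⁻¹ * g * (z * c⁻¹) = h
    have hz' : z⁻¹ * g * z = g := by
      rw [mul_assoc, ← hz, ← mul_assoc, inv_mul_cancel, one_mul]
    calc (z * c⁻¹)⁻¹ * g * (z * c⁻¹) = c * (z⁻¹ * g * z) * c⁻¹ := by group
    _ = c * g * c⁻¹ := by rw [hz']
    _ = h := hc
  · intro x; apply Subtype.ext; simp [mul_assoc]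
  · intro z; apply Subtype.ext; simp [mul_assoc]

/-- L3: summing over all `g` -/
lemma sum_card_solutions (H : Subgroup G) :
    ∑ g : G, Nat.card {x : G // x⁻¹ * g * x ∈ H} = Fintype.card G * Nat.card H := by
  classical
  have h1 : ∀ g : G, Nat.card {x : G // x⁻¹ * g * x ∈ H}
      = (Finset.univ.filter (fun x : G => x⁻¹ * g * x ∈ H)).card := by
    intro g
    rw [Nat.card_eq_fintype_card, Fintype.card_subtype]
  rw [Finset.sum_congr rfl fun g _ => h1 g]
  have h2 : ∀ g : G, (Finset.univ.filter (fun x : G => x⁻¹ * g * x ∈ H)).card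
      = ∑ x : G, if x⁻¹ * g * x ∈ H then 1 else 0 := by
    intro g
    rw [Finset.card_filter]
  rw [Finset.sum_congr rfl fun g _ => h2 g, Finset.sum_comm]
  have h3 : ∀ x : G, (∑ g : G, if x⁻¹ * g * x ∈ H then 1 else 0) = Nat.card H := by
    intro x
    rw [← Finset.card_filter]
    rw [← Fintype.card_subtype]
    rw [Nat.card_eq_fintype_card]
    apply Fintype.card_congr
    refine ⟨fun a => ⟨x⁻¹ * (a : G) * x, a.2⟩, fun h => ⟨x * (h : G) * x⁻¹, ?_⟩, ?_, ?_⟩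
    · show x⁻¹ * (x * (h : G) * x⁻¹) * x ∈ H
      have : x⁻¹ * (x * (h : G) * x⁻¹) * x = (h : G) := by group
      rw [this]; exact h.2
    · intro a; apply Subtype.ext; show x * (x⁻¹ * (a : G) * x) * x⁻¹ = (a : G); group
    · intro h; apply Subtype.ext; show x⁻¹ * (x * (h : G) * x⁻¹) * x = (h : G); group
  rw [Finset.sum_congr rfl fun x _ => h3 x, Finset.sum_const, Finset.card_univ, smul_eq_mul]

section Glue
variable (H : Subgroup G)

lemma natcard_fix_one : Nat.card {c : G ⧸ H // (1 : G) • c = c} = Nat.card (G ⧸ H) :=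
  Nat.card_congr (Equiv.subtypeUnivEquiv (fun c => one_smul G c))

lemma natcard_sol_one : Nat.card {x : G // x⁻¹ * 1 * x ∈ H} = Fintype.card G := by
  rw [← Nat.card_eq_fintype_card]
  exact Nat.card_congr (Equiv.subtypeUnivEquiv (fun x => by
    rw [show x⁻¹ * 1 * x = 1 by group]; exact H.one_mem))

end Glue

theorem main_iff (H₁ H₂ : Subgroup G) :
    (∃ e : (G ⧸ H₁ → ℂ) ≃ₗ[ℂ] (G ⧸ H₂ → ℂ),
      ∀ (g : G) (f : G ⧸ H₁ → ℂ),
        e (fun x => f (g⁻¹ • x)) = fun x => e f (g⁻¹ • x)) ↔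
    (∀ g : G, Nat.card {h : G // h ∈ H₁ ∧ IsConj g h}
            = Nat.card {h : G // h ∈ H₂ ∧ IsConj g h}) := by
  classical
  haveI : Fintype (G ⧸ H₁) := Fintype.ofFinite _
  haveI : Fintype (G ⧸ H₂) := Fintype.ofFinite _
  haveI : Nonempty ↥H₁ := ⟨⟨1, H₁.one_mem⟩⟩
  haveI : Nonempty ↥H₂ := ⟨⟨1, H₂.one_mem⟩⟩
  set ρ₁ := permRep (G := G) H₁ with hρ₁
  set ρ₂ := permRep (G := G) H₂ with hρ₂
  have hZpos : ∀ g : G, 0 < Nat.card {z : G // z * g = g * z} := by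
    intro g
    haveI : Nonempty {z : G // z * g = g * z} := ⟨⟨1, by group⟩⟩
    exact Nat.card_pos
  have hGpos : 0 < Fintype.card G := Fintype.card_pos
  constructor
  · rintro ⟨e, he⟩ g
    -- characters agree
    have hchar : ∀ g : G, trace ℂ _ (ρ₁ g) = trace ℂ _ (ρ₂ g) := by
      intro g'
      apply trace_eq_of_equivariant ρ₁ ρ₂ e
      intro g'' f
      exact he g'' f
    have hfix : ∀ g : G,
        Nat.card {c : G ⧸ H₁ // g • c = c} = Nat.card {c : G ⧸ H₂ // g • c = c} := by
      intro g'
      have := hchar g'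
      rw [char_permRep, char_permRep] at this
      exact_mod_cast this
    -- equal index
    have hd : Nat.card (G ⧸ H₁) = Nat.card (G ⧸ H₂) := by
      have := hfix 1
      rwa [natcard_fix_one, natcard_fix_one] at this
    have hdpos : 0 < Nat.card (G ⧸ H₁) := by
      haveI : Nonempty (G ⧸ H₁) := inferInstance
      exact Nat.card_pos
    have hm : Nat.card ↥H₁ = Nat.card ↥H₂ := by
      have h1 := card_fix_mul_card H₁ (1 : G)
      have h2 := card_fix_mul_card H₂ (1 : G)
      rw [natcard_fix_one, natcard_sol_one] at h1
      rw [natcard_fix_one, natcard_sol_one] at h2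
      rw [← hd] at h2
      have := h1.trans h2.symm
      exact Nat.eq_of_mul_eq_mul_left hdpos this
    have hS : Nat.card {x : G // x⁻¹ * g * x ∈ H₁} = Nat.card {x : G // x⁻¹ * g * x ∈ H₂} := by
      rw [← card_fix_mul_card, ← card_fix_mul_card, hfix g, hm]
    rw [card_solutions, card_solutions] at hS
    exact Nat.eq_of_mul_eq_mul_right (hZpos g) hS
  · intro ha
    have hS : ∀ g : G,
        Nat.card {x : G // x⁻¹ * g * x ∈ H₁} = Nat.card {x : G // x⁻¹ * g * x ∈ H₂} := by
      intro g
      rw [card_solutions, card_solutions, ha g]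
    have hm : Nat.card ↥H₁ = Nat.card ↥H₂ := by
      have h1 := sum_card_solutions H₁
      have h2 := sum_card_solutions H₂
      rw [Finset.sum_congr rfl fun g _ => hS g] at h1
      have := h1.symm.trans h2
      exact Nat.eq_of_mul_eq_mul_left hGpos this
    have hmpos : 0 < Nat.card ↥H₁ := Nat.card_pos
    have hfix : ∀ g : G,
        Nat.card {c : G ⧸ H₁ // g • c = c} = Nat.card {c : G ⧸ H₂ // g • c = c} := by
      intro g
      have h1 := card_fix_mul_card H₁ g
      have h2 := card_fix_mul_card H₂ g
      rw [← hm] at h2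
      have := h1.trans ((hS g).trans h2.symm)
      exact Nat.eq_of_mul_eq_mul_right hmpos this
    have hchar : ∀ g : G, trace ℂ _ (ρ₁ g) = trace ℂ _ (ρ₂ g) := by
      intro g
      rw [char_permRep, char_permRep, hfix g]
    obtain ⟨e, hecomm⟩ := exists_equiv_of_char_eq_aux (G := G)
      (Module.finrank ℂ (G ⧸ H₁ → ℂ)) (G ⧸ H₁ → ℂ) (G ⧸ H₂ → ℂ) ρ₁ ρ₂ le_rfl hchar
    refine ⟨e, fun g f => ?_⟩
    exact (LinearMap.congr_fun (hecomm g) f).symm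

end GassmannAux
end

/-- For a finite group `G` with subgroups `H₁` and `H₂`, the permutation
representations of `G` on `ℂ[H₁\G]` and `ℂ[H₂\G]` (modeled as the spaces of complex-valued
functions on the coset spaces, with the natural `G`-action) are equivalent if and only if
every conjugacy class of `G` intersects `H₁` and `H₂` in the same number of elements. -/
theorem gassmann_iff_perm_rep_equiv (G : Type) [Group G] [Fintype G]
    (H₁ H₂ : Subgroup G) :
    (∃ e : (G ⧸ H₁ → ℂ) ≃ₗ[ℂ] (G ⧸ H₂ → ℂ),
      ∀ (g : G) (f : G ⧸ H₁ → ℂ),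
        e (fun x => f (g⁻¹ • x)) = fun x => e f (g⁻¹ • x)) ↔
    (∀ g : G, Nat.card {h : G // h ∈ H₁ ∧ IsConj g h}
            = Nat.card {h : G // h ∈ H₂ ∧ IsConj g h}) :=
  GassmannAux.main_iff H₁ H₂
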